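/- Let A be an n×n complex matrix, let ‖·‖ denote the operator norm induced by the Euclidean norm, let α ≥ 1 be real, let j be a natural number, and let t ≥ 0. Then ‖Σ_{ℓ=0}^∞ Aˡ t^{αℓ+j}/Γ(αℓ + j + 1)‖ ≤ tʲ · exp(‖A‖ · tᵅ). -/

import Mathlib

open Nat (factorial)
open scoped Nat


open scoped Matrix.Norms.L2Operator

lemma factorial_le_gamma_aux (α : ℝ) (hα : 1 ≤ α) (j : ℕ) (ℓ : ℕ) :
    (ℓ ! : ℝ) ≤ Real.Gamma (α * ℓ + j + 1) := by
  rcases Nat.eq_zero_or_pos ℓ with rfl | hℓ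
  · simp only [Nat.cast_zero, mul_zero, zero_add, Nat.factorial_zero, Nat.cast_one]
    rw [Real.Gamma_nat_eq_factorial]
    exact_mod_cast Nat.one_le_iff_ne_zero.mpr (Nat.factorial_ne_zero j)
  · have h1 : (2 : ℝ) ≤ (ℓ : ℝ) + 1 := by
      have : (1 : ℝ) ≤ ℓ := by exact_mod_cast hℓ
      linarith
    have h2 : (ℓ : ℝ) + 1 ≤ α * ℓ + j + 1 := by
      have h3 : (ℓ : ℝ) ≤ α * ℓ := by nlinarith [Nat.cast_nonneg (α := ℝ) ℓ]
      have hj : (0 : ℝ) ≤ j := Nat.cast_nonneg j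
      linarith
    have := Real.Gamma_strictMonoOn_Ici.monotoneOn (Set.mem_Ici.mpr h1)
      (Set.mem_Ici.mpr (le_trans h1 h2)) h2
    rwa [Real.Gamma_nat_eq_factorial] at this

lemma matrix_norm_one_le (n : ℕ) : ‖(1 : Matrix (Fin n) (Fin n) ℂ)‖ ≤ 1 := by
  rw [Matrix.cstar_norm_def, map_one, ContinuousLinearMap.one_def]
  exact ContinuousLinearMap.norm_id_le

lemma matrix_norm_pow_le {n : ℕ} (A : Matrix (Fin n) (Fin n) ℂ) (ℓ : ℕ) :
    ‖A ^ ℓ‖ ≤ ‖A‖ ^ ℓ := by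
  rcases Nat.eq_zero_or_pos ℓ with rfl | hℓ
  · simpa using matrix_norm_one_le n
  · exact norm_pow_le' A hℓ

/-- Bound (2.17) of Lemma 2.2(ii): for `α ≥ 1`, `j : ℕ` and `t ≥ 0`, the fundamental
matrix `Φ_{αj}(t) = Σ_ℓ Aˡ t^{αℓ+j}/Γ(αℓ+j+1)` satisfies
`‖Φ_{αj}(t)‖ ≤ tʲ · exp(‖A‖ tᵅ)`, with the operator norm induced by the Euclidean norm. -/
theorem phi_alpha_j_norm_le {n : ℕ} (A : Matrix (Fin n) (Fin n) ℂ)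
    (α : ℝ) (hα : 1 ≤ α) (j : ℕ) (t : ℝ) (ht : 0 ≤ t) :
    ‖∑' ℓ : ℕ, ((t ^ (α * ℓ + j) / Real.Gamma (α * ℓ + j + 1) : ℝ) : ℂ) • A ^ ℓ‖ ≤
      t ^ (j : ℝ) * Real.exp (‖A‖ * t ^ α) := by
  have hα0 : 0 < α := lt_of_lt_of_le one_pos hα
  have hgam : ∀ ℓ : ℕ, 0 < Real.Gamma (α * ℓ + j + 1) := by
    intro ℓ
    apply Real.Gamma_pos_of_pos
    have h1 : (0:ℝ) ≤ α * ℓ := by positivity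
    have h2 : (0:ℝ) ≤ j := Nat.cast_nonneg j
    linarith
  have hexp : HasSum (fun ℓ : ℕ => t ^ (j : ℝ) * ((‖A‖ * t ^ α) ^ ℓ / ℓ !))
      (t ^ (j : ℝ) * Real.exp (‖A‖ * t ^ α)) := by
    rw [Real.exp_eq_exp_ℝ, NormedSpace.exp_eq_tsum_div]
    exact ((NormedSpace.expSeries_div_summable (‖A‖ * t ^ α)).hasSum).mul_left _
  refine tsum_of_norm_bounded hexp fun ℓ => ?_
  have hcoef : (0:ℝ) ≤ t ^ (α * ℓ + j) / Real.Gamma (α * ℓ + j + 1) := by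
    apply div_nonneg (Real.rpow_nonneg ht _) (hgam ℓ).le
  calc ‖((t ^ (α * ℓ + j) / Real.Gamma (α * ℓ + j + 1) : ℝ) : ℂ) • A ^ ℓ‖
      = (t ^ (α * ℓ + j) / Real.Gamma (α * ℓ + j + 1)) * ‖A ^ ℓ‖ := by
        rw [norm_smul, Complex.norm_real, Real.norm_eq_abs, abs_of_nonneg hcoef]
    _ ≤ (t ^ (α * ℓ + j) / (ℓ ! : ℝ)) * ‖A‖ ^ ℓ := by
        apply mul_le_mul ?_ (matrix_norm_pow_le A ℓ) (norm_nonneg _) (by positivity)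
        apply div_le_div_of_nonneg_left (Real.rpow_nonneg ht _)
          (by exact_mod_cast Nat.factorial_pos ℓ) (factorial_le_gamma_aux α hα j ℓ)
    _ = t ^ (j : ℝ) * ((‖A‖ * t ^ α) ^ ℓ / ℓ !) := by
        have hsplit : t ^ (α * ℓ + j) = (t ^ α) ^ ℓ * t ^ (j : ℝ) := by
          rw [Real.rpow_add_of_nonneg ht (by positivity) (Nat.cast_nonneg j),
            Real.rpow_mul ht, Real.rpow_natCast]
        rw [hsplit, mul_pow]
        field_simp
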